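/- (Per-slot movement bound) Fix a slot t ∈ {1,2,3,…} and let θ ≥ 0 be any constant with ‖Q(t)‖ ≤ θV. If X_t is produced by the algorithm with parameters V > 0 and α > 0 (i.e. X_t minimizes [V f_{t−1}'(X_{t−1}) + Σ_{i=1}^k Q_i(t) g_{t−1,i}'(X_{t−1})]ᵀ x + α‖x − X_{t−1}‖² over x ∈ 𝒳), then ‖X_t − X_{t−1}‖ ≤ VG(1 + θ√k)/(2α). -/

import Mathlib

open scoped RealInnerProductSpace

/-- **Per-slot movement bound.**  Fix a slot and let `θ ≥ 0` satisfy `‖Q(t)‖ ≤ θV`.  If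
`X_t` minimizes `[V f_{t−1}'(X_{t−1}) + Σ_i Q_i(t) g_{t−1,i}'(X_{t−1})]ᵀ x + α‖x − X_{t−1}‖²`
over `x ∈ 𝒳`, then `‖X_t − X_{t−1}‖ ≤ VG(1 + θ√k)/(2α)`.  Here `Xprev` plays the role of
`X_{t−1}`, `Xt` of `X_t`, `fv` of `f_{t−1}'(X_{t−1})` and `gv i` of `g_{t−1,i}'(X_{t−1})`. -/
theorem stmt7 (n k : ℕ) (hk : 0 < k)
    (𝒳 : Set (EuclideanSpace ℝ (Fin n)))
    (h_ne : 𝒳.Nonempty) (h_cpt : IsCompact 𝒳) (h_cvx : Convex ℝ 𝒳)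
    (G : ℝ) (hG : 0 ≤ G)
    (V α : ℝ) (hV : 0 < V) (hα : 0 < α)
    (Q : Fin k → ℝ) (hQnn : ∀ i, 0 ≤ Q i)
    (θ : ℝ) (hθnn : 0 ≤ θ)
    (hQbd : Real.sqrt (∑ i, (Q i) ^ 2) ≤ θ * V)
    (Xprev : EuclideanSpace ℝ (Fin n)) (hXprev : Xprev ∈ 𝒳)
    (fv : EuclideanSpace ℝ (Fin n)) (hfv : ‖fv‖ ≤ G)
    (gv : Fin k → EuclideanSpace ℝ (Fin n)) (hgv : ∀ i, ‖gv i‖ ≤ G)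
    (Xt : EuclideanSpace ℝ (Fin n)) (hXt : Xt ∈ 𝒳)
    (halg : ∀ x ∈ 𝒳,
      ⟪V • fv + ∑ i, Q i • gv i, Xt⟫ + α * ‖Xt - Xprev‖ ^ 2 ≤
        ⟪V • fv + ∑ i, Q i • gv i, x⟫ + α * ‖x - Xprev‖ ^ 2) :
    ‖Xt - Xprev‖ ≤ V * G * (1 + θ * Real.sqrt k) / (2 * α) := by
  set d : EuclideanSpace ℝ (Fin n) := V • fv + ∑ i, Q i • gv i with hd
  set r : ℝ := ‖Xt - Xprev‖ with hr
  have hrnn : 0 ≤ r := norm_nonneg _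
  -- norm bound on d
  have hdbd : ‖d‖ ≤ V * G * (1 + θ * Real.sqrt k) := by
    have hsum : ∑ i, Q i ≤ Real.sqrt k * (θ * V) := by
      have h1 : (∑ i, Q i) ^ 2 ≤ (k : ℝ) * ∑ i, (Q i) ^ 2 := by
        simpa using sq_sum_le_card_mul_sum_sq (s := Finset.univ) (f := Q)
      have h2 : ∑ i, Q i ≤ Real.sqrt ((k : ℝ) * ∑ i, (Q i) ^ 2) := by
        rw [show ∑ i, Q i = Real.sqrt ((∑ i, Q i) ^ 2) from
          (Real.sqrt_sq (Finset.sum_nonneg fun i _ => hQnn i)).symm]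
        exact Real.sqrt_le_sqrt h1
      calc ∑ i, Q i ≤ Real.sqrt ((k : ℝ) * ∑ i, (Q i) ^ 2) := h2
        _ = Real.sqrt k * Real.sqrt (∑ i, (Q i) ^ 2) := by
            rw [Real.sqrt_mul (Nat.cast_nonneg k)]
        _ ≤ Real.sqrt k * (θ * V) := by
            exact mul_le_mul_of_nonneg_left hQbd (Real.sqrt_nonneg _)
    have h3 : ‖∑ i, Q i • gv i‖ ≤ ∑ i, Q i * G := by
      refine (norm_sum_le _ _).trans ?_
      refine Finset.sum_le_sum fun i _ => ?_
      rw [norm_smul, Real.norm_eq_abs, abs_of_nonneg (hQnn i)]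
      exact mul_le_mul_of_nonneg_left (hgv i) (hQnn i)
    have h4 : ‖d‖ ≤ V * G + (∑ i, Q i) * G := by
      calc ‖d‖ ≤ ‖V • fv‖ + ‖∑ i, Q i • gv i‖ := norm_add_le _ _
        _ ≤ V * G + ∑ i, Q i * G := by
            have : ‖V • fv‖ ≤ V * G := by
              rw [norm_smul, Real.norm_eq_abs, abs_of_pos hV]
              exact mul_le_mul_of_nonneg_left hfv hV.le
            exact add_le_add this h3
        _ = V * G + (∑ i, Q i) * G := by rw [Finset.sum_mul]
    calc ‖d‖ ≤ V * G + (∑ i, Q i) * G := h4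
      _ ≤ V * G + Real.sqrt k * (θ * V) * G :=
          add_le_add (le_refl _) (mul_le_mul_of_nonneg_right hsum hG)
      _ = V * G * (1 + θ * Real.sqrt k) := by ring
  -- key step: 2 α r² ≤ ⟪d, Xprev - Xt⟫
  have hkey : 2 * α * r ^ 2 ≤ ⟪d, Xprev - Xt⟫ := by
    have hstep : ∀ ε : ℝ, 0 < ε → ε ≤ 1 →
        (2 - ε) * α * r ^ 2 ≤ ⟪d, Xprev - Xt⟫ := by
      intro ε hε0 hε1
      set y : EuclideanSpace ℝ (Fin n) := Xt + ε • (Xprev - Xt) with hy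
      have hy𝒳 : y ∈ 𝒳 := by
        have := h_cvx hXt hXprev (by linarith : (0:ℝ) ≤ 1 - ε) hε0.le (by ring)
        convert this using 1
        simp only [hy, smul_sub]
        module
      have h5 := halg y hy𝒳
      have hyX : y - Xprev = (1 - ε) • (Xt - Xprev) := by
        simp only [hy, smul_sub]; module
      have hiy : ⟪d, y⟫ = ⟪d, Xt⟫ + ε * ⟪d, Xprev - Xt⟫ := by
        simp [hy, inner_add_right, inner_smul_right]
      have hny : ‖y - Xprev‖ ^ 2 = (1 - ε) ^ 2 * r ^ 2 := by
        rw [hyX, norm_smul, mul_pow, Real.norm_eq_abs, sq_abs, hr]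
      rw [hiy, hny] at h5
      have h6 : (2 * ε - ε ^ 2) * α * r ^ 2 ≤ ε * ⟪d, Xprev - Xt⟫ := by nlinarith
      have := (mul_le_mul_iff_right₀ hε0).mp (by linarith : ε * ((2 - ε) * α * r ^ 2) ≤ ε * ⟪d, Xprev - Xt⟫)
      linarith [this]
    -- pass to the limit ε → 0
    refine le_of_forall_pos_le_add fun δ hδ => ?_
    rcases eq_or_lt_of_le (by positivity : (0:ℝ) ≤ α * r ^ 2) with h0 | h0
    · have := hstep 1 one_pos le_rfl
      nlinarith
    · set ε := min 1 (δ / (α * r ^ 2)) with hε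
      have hε0 : 0 < ε := lt_min one_pos (by positivity)
      have h7 := hstep ε hε0 (min_le_left _ _)
      have h8 : ε * (α * r ^ 2) ≤ δ := by
        calc ε * (α * r ^ 2) ≤ (δ / (α * r ^ 2)) * (α * r ^ 2) :=
              mul_le_mul_of_nonneg_right (min_le_right _ _) h0.le
          _ = δ := div_mul_cancel₀ δ h0.ne'
      nlinarith
  -- conclude
  have hCS : ⟪d, Xprev - Xt⟫ ≤ ‖d‖ * r := by
    calc ⟪d, Xprev - Xt⟫ ≤ ‖d‖ * ‖Xprev - Xt‖ := real_inner_le_norm _ _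
      _ = ‖d‖ * r := by rw [hr, norm_sub_rev]
  rcases eq_or_lt_of_le hrnn with h0 | h0
  · rw [← h0]; positivity
  · have h9 : 2 * α * r ≤ ‖d‖ := by
      have := hkey.trans hCS
      nlinarith
    rw [div_eq_inv_mul, ← mul_le_mul_iff_right₀ (by positivity : (0:ℝ) < 2 * α)]
    calc 2 * α * r ≤ ‖d‖ := h9
      _ ≤ V * G * (1 + θ * Real.sqrt k) := hdbd
      _ = 2 * α * ((2 * α)⁻¹ * (V * G * (1 + θ * Real.sqrt k))) := by
          field_simp
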